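/- The sequence of monomials (e_k)_{k∈ℕ}, e_k(t) = t^k, is a Bessel sequence in L²((−1,1), Lebesgue measure) with Bessel bound 2π; that is, ∑_{k∈ℕ} |∫_{−1}^{1} g(t) t^k dt|² ≤ 2π ∫_{−1}^{1} |g(t)|² dt for every g ∈ L²(−1,1). -/

import Mathlib

open MeasureTheory Real Set

lemma arctan_add_le' (a b : ℝ) (hb : 0 ≤ b) (hab : a * b ≤ 1) :
    arctan a + arctan b ≤ π / 2 := by
  rcases eq_or_lt_of_le hb with h | h
  · simp [← h, (arctan_lt_pi_div_two a).le]
  · have ha' : a ≤ b⁻¹ := by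
      rw [← one_div, le_div_iff₀ h]; exact hab
    calc arctan a + arctan b ≤ arctan b⁻¹ + arctan b :=
          add_le_add_left (arctan_strictMono.monotone ha') _
      _ = π / 2 := by rw [arctan_inv_of_pos h]; ring

lemma key_ftc {r : ℝ} (hr0 : 0 ≤ r) (hr1 : r < 1) :
    ∫ θ in (0:ℝ)..(π/2), (1 - r * Real.sin θ)⁻¹ ≤ π / Real.sqrt (1 - r^2) := by
  have hc0 : 0 < Real.sqrt (1 - r^2) := Real.sqrt_pos.mpr (by nlinarith)
  set c := Real.sqrt (1 - r^2) with hcdef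
  have hcsq : c^2 = 1 - r^2 := Real.sq_sqrt (by nlinarith)
  set G : ℝ → ℝ := fun θ => (2/c) * arctan ((Real.tan (θ/2) - r)/c) with hG
  have hderiv : ∀ θ ∈ uIcc (0:ℝ) (π/2), HasDerivAt G ((1 - r * Real.sin θ)⁻¹) θ := by
    intro θ hθ
    rw [uIcc_of_le (by positivity)] at hθ
    obtain ⟨h0, h1⟩ := hθ
    have hpi := pi_pos
    have hco : 0 < Real.cos (θ/2) :=
      Real.cos_pos_of_mem_Ioo ⟨by linarith, by linarith⟩
    have hhalf : HasDerivAt (fun x : ℝ => x/2) (1/2) θ := (hasDerivAt_id θ).div_const 2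
    have htan : HasDerivAt (fun x : ℝ => Real.tan (x/2))
        (1 / Real.cos (θ/2) ^ 2 * (1/2)) θ :=
      by have := (Real.hasDerivAt_tan hco.ne').comp θ hhalf; exact this
    have hu : HasDerivAt (fun x : ℝ => (Real.tan (x/2) - r)/c)
        (1 / Real.cos (θ/2) ^ 2 * (1/2) / c) θ := (htan.sub_const r).div_const c
    have harc : HasDerivAt G
        ((2/c) * (1 / (1 + ((Real.tan (θ/2) - r)/c)^2) * (1 / Real.cos (θ/2) ^ 2 * (1/2) / c))) θ :=
      ((Real.hasDerivAt_arctan _).comp θ hu).const_mul _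
    convert harc using 1
    have hsin : Real.sin θ = 2 * Real.sin (θ/2) * Real.cos (θ/2) := by
      rw [show θ = 2*(θ/2) by ring, Real.sin_two_mul]; ring_nf
    have hpy : Real.sin (θ/2)^2 + Real.cos (θ/2)^2 = 1 := Real.sin_sq_add_cos_sq _
    have htaneq : Real.tan (θ/2) = Real.sin (θ/2) / Real.cos (θ/2) := Real.tan_eq_sin_div_cos _
    have hpos : 0 < 1 - r * Real.sin θ := by
      nlinarith [Real.neg_one_le_sin θ, Real.sin_le_one θ]
    have hden : c^2 * (1 + ((Real.tan (θ/2) - r)/c)^2) * Real.cos (θ/2)^2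
        = 1 - r * Real.sin θ := by
      rw [htaneq, hsin]
      field_simp
      linear_combination hpy + (Real.cos (θ/2)^2) * hcsq
    have h1u : (0:ℝ) < 1 + ((Real.tan (θ/2) - r)/c)^2 := by positivity
    rw [← hden]
    field_simp
  have hcont : IntervalIntegrable (fun θ => (1 - r*Real.sin θ)⁻¹) volume 0 (π/2) := by
    apply Continuous.intervalIntegrable
    refine (continuous_const.sub (continuous_const.mul Real.continuous_sin)).inv₀ ?_
    intro θ
    show (1:ℝ) - r * Real.sin θ ≠ 0
    nlinarith [Real.neg_one_le_sin θ, Real.sin_le_one θ]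
  rw [intervalIntegral.integral_eq_sub_of_hasDerivAt hderiv hcont]
  have e1 : G (π/2) = (2/c) * arctan ((1-r)/c) := by
    simp only [hG]
    rw [show π/2/2 = π/4 by ring, Real.tan_pi_div_four]
  have e2 : G 0 = -((2/c) * arctan (r/c)) := by
    have h0 : (Real.tan ((0:ℝ)/2) - r)/c = -(r/c) := by rw [show ((0:ℝ)/2) = 0 by norm_num, Real.tan_zero]; ring
    simp only [hG]
    rw [h0, arctan_neg]
    ring
  rw [e1, e2]
  have hsum : arctan ((1-r)/c) + arctan (r/c) ≤ π/2 := by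
    apply arctan_add_le' _ _ (by positivity)
    rw [div_mul_div_comm]
    rw [div_le_one (by positivity)]
    nlinarith
  have : (2/c) * (arctan ((1-r)/c) + arctan (r/c)) ≤ (2/c) * (π/2) := by
    apply mul_le_mul_of_nonneg_left hsum (by positivity)
  calc (2/c) * arctan ((1-r)/c) - -((2/c) * arctan (r/c))
      = (2/c) * (arctan ((1-r)/c) + arctan (r/c)) := by ring
    _ ≤ (2/c) * (π/2) := this
    _ = π / c := by ring

lemma sin_image_Ioo : Real.sin '' Ioo (-(π/2)) (π/2) = Ioo (-1 : ℝ) 1 := by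
  ext y
  constructor
  · rintro ⟨θ, hθ, rfl⟩
    have hpi := pi_pos
    constructor
    · have : Real.sin (-(π/2)) < Real.sin θ :=
        Real.strictMonoOn_sin ⟨le_refl _, by linarith⟩ ⟨hθ.1.le, hθ.2.le⟩ hθ.1
      simpa using this
    · have : Real.sin θ < Real.sin (π/2) :=
        Real.strictMonoOn_sin ⟨hθ.1.le, hθ.2.le⟩ ⟨by linarith, le_refl _⟩ hθ.2
      simpa using this
  · intro hy
    exact ⟨Real.arcsin y, ⟨Real.neg_pi_div_two_lt_arcsin.2 hy.1,
      Real.arcsin_lt_pi_div_two.2 hy.2⟩, Real.sin_arcsin hy.1.le hy.2.le⟩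

lemma key_lintegral {r : ℝ} (hr0 : 0 ≤ r) (hr1 : r < 1) :
    ∫⁻ θ in Ioo (-(π/2)) (π/2), ENNReal.ofReal ((1 - r * |Real.sin θ|)⁻¹)
      ≤ ENNReal.ofReal (2 * π / Real.sqrt (1 - r^2)) := by
  have hpi := pi_pos
  have hden : ∀ x : ℝ, 0 < 1 - r * |Real.sin x| := by
    intro x
    have h1 : |Real.sin x| ≤ 1 := abs_sin_le_one x
    nlinarith [abs_nonneg (Real.sin x)]
  have hcont : Continuous (fun θ : ℝ => (1 - r * |Real.sin θ|)⁻¹) :=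
    (continuous_const.sub (continuous_const.mul Real.continuous_sin.abs)).inv₀
      (fun x => (hden x).ne')
  have hint : IntegrableOn (fun θ : ℝ => (1 - r * |Real.sin θ|)⁻¹)
      (Ioo (-(π/2)) (π/2)) volume :=
    (hcont.integrableOn_Icc).mono_set Ioo_subset_Icc_self
  rw [← ofReal_integral_eq_lintegral_ofReal hint
    (Filter.Eventually.of_forall fun x => inv_nonneg.mpr (hden x).le)]
  apply ENNReal.ofReal_le_ofReal
  have h1 : ∫ θ in Ioo (-(π/2)) (π/2), (1 - r * |Real.sin θ|)⁻¹
      = ∫ θ in (-(π/2))..(π/2), (1 - r * |Real.sin θ|)⁻¹ := by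
    rw [intervalIntegral.integral_of_le (by linarith), integral_Ioc_eq_integral_Ioo]
  rw [h1]
  have hii : ∀ a b : ℝ, IntervalIntegrable (fun θ : ℝ => (1 - r * |Real.sin θ|)⁻¹) volume a b :=
    fun a b => hcont.intervalIntegrable a b
  rw [← intervalIntegral.integral_add_adjacent_intervals (hii (-(π/2)) 0) (hii 0 (π/2))]
  have heven : ∫ θ in (-(π/2))..(0:ℝ), (1 - r * |Real.sin θ|)⁻¹
      = ∫ θ in (0:ℝ)..(π/2), (1 - r * |Real.sin θ|)⁻¹ := by
    have := intervalIntegral.integral_comp_neg (a := (0:ℝ)) (b := π/2)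
      (fun θ : ℝ => (1 - r * |Real.sin θ|)⁻¹)
    simp only [Real.sin_neg, abs_neg, neg_zero] at this
    rw [← this]
  have hhalf : ∫ θ in (0:ℝ)..(π/2), (1 - r * |Real.sin θ|)⁻¹ ≤ π / Real.sqrt (1 - r^2) := by
    have hcongr : ∫ θ in (0:ℝ)..(π/2), (1 - r * |Real.sin θ|)⁻¹
        = ∫ θ in (0:ℝ)..(π/2), (1 - r * Real.sin θ)⁻¹ := by
      apply intervalIntegral.integral_congr
      intro x hx
      simp only []
      rw [uIcc_of_le (by linarith)] at hx
      rw [abs_of_nonneg (Real.sin_nonneg_of_nonneg_of_le_pi hx.1 (by linarith [hx.2]))]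
    rw [hcongr]
    exact key_ftc hr0 hr1
  rw [heven]
  calc _ ≤ π / Real.sqrt (1 - r^2) + π / Real.sqrt (1 - r^2) := add_le_add hhalf hhalf
    _ = 2 * π / Real.sqrt (1 - r^2) := by ring

lemma lintegral_image_deriv {s : Set ℝ} {f f' : ℝ → ℝ}
    (hs : MeasurableSet s) (hf' : ∀ x ∈ s, HasDerivWithinAt f (f' x) s x)
    (hf : Set.InjOn f s) (g : ℝ → ENNReal) :
    ∫⁻ x in f '' s, g x = ∫⁻ x in s, ENNReal.ofReal |f' x| * g (f x) := by
  simpa only [ContinuousLinearMap.det_toSpanSingleton] using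
    lintegral_image_eq_lintegral_abs_det_fderiv_mul volume hs
      (fun x hx => (hf' x hx).hasFDerivWithinAt) hf g

lemma A_change (k : ℕ) :
    ∫⁻ t in Ioo (-1:ℝ) 1,
        ENNReal.ofReal (|t|^k) * (ENNReal.ofReal (Real.sqrt (1 - t^2)))⁻¹
      = ∫⁻ θ in Ioo (-(π/2)) (π/2), ENNReal.ofReal (|Real.sin θ|^k) := by
  rw [← sin_image_Ioo, lintegral_image_deriv measurableSet_Ioo
      (fun x _ => (Real.hasDerivAt_sin x).hasDerivWithinAt)
      (Real.injOn_sin.mono Ioo_subset_Icc_self)]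
  apply setLIntegral_congr_fun measurableSet_Ioo
  intro θ hθ
  have hpi := pi_pos
  have hcos : 0 < Real.cos θ := Real.cos_pos_of_mem_Ioo hθ
  have hsq : Real.sqrt (1 - Real.sin θ^2) = Real.cos θ := by
    rw [← Real.cos_sq']
    exact Real.sqrt_sq hcos.le
  beta_reduce
  rw [hsq, abs_of_pos hcos]
  rw [mul_comm (ENNReal.ofReal (|Real.sin θ|^k)) _, ← mul_assoc,
    ENNReal.mul_inv_cancel (by simpa using hcos) ENNReal.ofReal_ne_top, one_mul]

lemma sum_pow_le (F : Finset ℕ) {x : ℝ} (h0 : 0 ≤ x) (h1 : x < 1) :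
    ∑ k ∈ F, x^k ≤ (1-x)⁻¹ := by
  classical
  obtain ⟨N, hN⟩ : ∃ N, F ⊆ Finset.range N :=
    ⟨(F.sup id)+1, fun k hk => Finset.mem_range.2 (Nat.lt_succ_of_le (Finset.le_sup (f := id) hk))⟩
  have h2 : (∑ i ∈ Finset.range N, x^i) * (1 - x) = 1 - x^N := by
    have := geom_sum_mul x N
    linear_combination -this
  calc ∑ k ∈ F, x^k ≤ ∑ k ∈ Finset.range N, x^k :=
        Finset.sum_le_sum_of_subset_of_nonneg hN (fun i _ _ => pow_nonneg h0 i)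
    _ ≤ (1-x)⁻¹ := by
        rw [← one_div, le_div_iff₀ (by linarith)]
        rw [h2]
        nlinarith [pow_nonneg h0 N]

lemma sum_A_le (F : Finset ℕ) {r : ℝ} (hr0 : 0 ≤ r) (hr1 : r < 1) :
    ∑ k ∈ F, (∫⁻ θ in Ioo (-(π/2)) (π/2), ENNReal.ofReal (|Real.sin θ|^k))
        * ENNReal.ofReal (r^k)
      ≤ ENNReal.ofReal (2 * π / Real.sqrt (1 - r^2)) := by
  have hmeas : ∀ k : ℕ, AEMeasurable (fun θ : ℝ => ENNReal.ofReal ((r * |Real.sin θ|)^k))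
      (volume.restrict (Ioo (-(π/2)) (π/2))) := by
    intro k
    exact (ENNReal.continuous_ofReal.comp
      ((continuous_const.mul Real.continuous_sin.abs).pow k)).measurable.aemeasurable
  have hstep : ∀ k : ℕ, (∫⁻ θ in Ioo (-(π/2)) (π/2), ENNReal.ofReal (|Real.sin θ|^k))
      * ENNReal.ofReal (r^k)
      = ∫⁻ θ in Ioo (-(π/2)) (π/2), ENNReal.ofReal ((r * |Real.sin θ|)^k) := by
    intro k
    rw [← lintegral_mul_const' (ENNReal.ofReal (r^k)) _ ENNReal.ofReal_ne_top]
    congr 1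
    funext θ
    rw [← ENNReal.ofReal_mul (by positivity), mul_pow]
    ring_nf
  rw [Finset.sum_congr rfl (fun k _ => hstep k), ← lintegral_finset_sum' F (fun k _ => hmeas k)]
  refine le_trans (lintegral_mono fun θ => ?_) (key_lintegral hr0 hr1)
  have hx0 : 0 ≤ r * |Real.sin θ| := by positivity
  have hx1 : r * |Real.sin θ| < 1 :=
    lt_of_le_of_lt (by nlinarith [abs_sin_le_one θ, abs_nonneg (Real.sin θ)]) hr1
  calc ∑ k ∈ F, ENNReal.ofReal ((r * |Real.sin θ|)^k)
      = ENNReal.ofReal (∑ k ∈ F, (r * |Real.sin θ|)^k) := by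
        rw [ENNReal.ofReal_sum_of_nonneg (fun k _ => by positivity)]
    _ ≤ ENNReal.ofReal ((1 - r * |Real.sin θ|)⁻¹) :=
        ENNReal.ofReal_le_ofReal (sum_pow_le F hx0 hx1)

lemma cs_step {g : ℝ → ℂ}
    (hgm : AEMeasurable (fun t => (‖g t‖₊ : ENNReal)) (volume.restrict (Ioo (-1:ℝ) 1)))
    (k : ℕ) :
    (∫⁻ t in Ioo (-1:ℝ) 1, (‖g t‖₊ : ENNReal) * ENNReal.ofReal (|t|^k))^2
      ≤ (∫⁻ t in Ioo (-1:ℝ) 1,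
            (‖g t‖₊ : ENNReal)^2 * ENNReal.ofReal (Real.sqrt (1-t^2)) * ENNReal.ofReal (|t|^k))
        * (∫⁻ t in Ioo (-1:ℝ) 1,
            ENNReal.ofReal (|t|^k) * (ENNReal.ofReal (Real.sqrt (1-t^2)))⁻¹) := by
  set μ := volume.restrict (Ioo (-1:ℝ) 1) with hμ
  set X : ℝ → ENNReal := fun t =>
    (‖g t‖₊ : ENNReal)^2 * ENNReal.ofReal (Real.sqrt (1-t^2)) * ENNReal.ofReal (|t|^k) with hX
  set Y : ℝ → ENNReal := fun t =>
    ENNReal.ofReal (|t|^k) * (ENNReal.ofReal (Real.sqrt (1-t^2)))⁻¹ with hY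
  have hwc : Continuous (fun t : ℝ => ENNReal.ofReal (Real.sqrt (1-t^2))) :=
    ENNReal.continuous_ofReal.comp (Real.continuous_sqrt.comp
      (continuous_const.sub (continuous_pow 2)))
  have hpc : Continuous (fun t : ℝ => ENNReal.ofReal (|t|^k)) :=
    ENNReal.continuous_ofReal.comp ((continuous_abs.pow k))
  have hXm : AEMeasurable X μ :=
    ((hgm.pow_const 2).mul hwc.measurable.aemeasurable).mul hpc.measurable.aemeasurable
  have hYm : AEMeasurable Y μ :=
    hpc.measurable.aemeasurable.mul hwc.measurable.inv.aemeasurable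
  have hconj : (2:ℝ).HolderConjugate 2 := Real.HolderConjugate.two_two
  have CS := ENNReal.lintegral_mul_le_Lp_mul_Lq μ hconj
    (hXm.pow_const (1/2 : ℝ)) (hYm.pow_const (1/2 : ℝ))
  have hpoint : ∀ t ∈ Ioo (-1:ℝ) 1,
      (‖g t‖₊ : ENNReal) * ENNReal.ofReal (|t|^k)
        = ((fun t => X t ^ (1/2:ℝ)) * fun t => Y t ^ (1/2:ℝ)) t := by
    intro t ht
    have h1 : (0:ℝ) < 1 - t^2 := by nlinarith [ht.1, ht.2]
    have hw0 : ENNReal.ofReal (Real.sqrt (1-t^2)) ≠ 0 := by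
      simp [Real.sqrt_pos.mpr h1, ne_of_gt]
    have hXY : X t * Y t = ((‖g t‖₊ : ENNReal) * ENNReal.ofReal (|t|^k))^2 := by
      have hcancel : ENNReal.ofReal (Real.sqrt (1-t^2))
          * (ENNReal.ofReal (Real.sqrt (1-t^2)))⁻¹ = 1 :=
        ENNReal.mul_inv_cancel hw0 ENNReal.ofReal_ne_top
      calc X t * Y t
          = ((‖g t‖₊ : ENNReal) * ENNReal.ofReal (|t|^k))^2
            * (ENNReal.ofReal (Real.sqrt (1-t^2))
              * (ENNReal.ofReal (Real.sqrt (1-t^2)))⁻¹) := by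
            simp only [hX, hY]; ring
        _ = _ := by rw [hcancel, mul_one]
    show _ = X t ^ (1/2:ℝ) * Y t ^ (1/2:ℝ)
    rw [← ENNReal.mul_rpow_of_nonneg _ _ (by norm_num : (0:ℝ) ≤ 1/2), hXY,
      ← ENNReal.rpow_natCast _ 2, ← ENNReal.rpow_mul]
    norm_num
  have hcongr : ∫⁻ t in Ioo (-1:ℝ) 1, (‖g t‖₊ : ENNReal) * ENNReal.ofReal (|t|^k)
      = ∫⁻ t, ((fun t => X t ^ (1/2:ℝ)) * fun t => Y t ^ (1/2:ℝ)) t ∂μ :=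
    setLIntegral_congr_fun measurableSet_Ioo hpoint
  have hrw : ∀ Z : ℝ → ENNReal, (fun t => (Z t ^ (1/2:ℝ)) ^ (2:ℝ)) = Z := by
    intro Z
    funext t
    rw [← ENNReal.rpow_mul]
    norm_num
  rw [hcongr]
  calc (∫⁻ t, ((fun t => X t ^ (1/2:ℝ)) * fun t => Y t ^ (1/2:ℝ)) t ∂μ)^2
      ≤ ((∫⁻ t, (X t ^ (1/2:ℝ)) ^ (2:ℝ) ∂μ) ^ (1/(2:ℝ))
          * (∫⁻ t, (Y t ^ (1/2:ℝ)) ^ (2:ℝ) ∂μ) ^ (1/(2:ℝ)))^2 := by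
        rw [pow_two, pow_two]; exact mul_le_mul' CS CS
    _ = (∫⁻ t, X t ∂μ) * (∫⁻ t, Y t ∂μ) := by
        simp only [hrw X, hrw Y]
        rw [mul_pow, ← ENNReal.rpow_natCast (_ ^ (1/(2:ℝ))) 2,
          ← ENNReal.rpow_natCast ((∫⁻ t, Y t ∂μ) ^ (1/(2:ℝ))) 2,
          ← ENNReal.rpow_mul, ← ENNReal.rpow_mul]
        norm_num

theorem stmt_9 :
    ∀ g : ℝ → ℂ, MemLp g 2 (volume.restrict (Set.Ioo (-1 : ℝ) 1)) → ∀ F : Finset ℕ,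
      ∑ k ∈ F, ‖∫ t in Set.Ioo (-1 : ℝ) 1, g t * (starRingEnd ℂ) ((t : ℂ) ^ k)‖ ^ 2 ≤
        2 * π * ∫ t in Set.Ioo (-1 : ℝ) 1, ‖g t‖ ^ 2 := by
  intro g hg F
  have hgm : AEMeasurable (fun t => (‖g t‖₊ : ENNReal)) (volume.restrict (Ioo (-1:ℝ) 1)) :=
    hg.aestronglyMeasurable.enorm
  set c : ℕ → ℂ := fun k => ∫ t in Set.Ioo (-1 : ℝ) 1, g t * (starRingEnd ℂ) ((t : ℂ) ^ k)
    with hc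
  set L : ENNReal := ∫⁻ t in Ioo (-1:ℝ) 1, ((‖g t‖₊ : ENNReal))^2 with hLdef
  set A : ℕ → ENNReal :=
    fun k => ∫⁻ θ in Ioo (-(π/2)) (π/2), ENNReal.ofReal (|Real.sin θ|^k) with hA
  set X : ℕ → ℝ → ENNReal := fun k t =>
    (‖g t‖₊ : ENNReal)^2 * ENNReal.ofReal (Real.sqrt (1-t^2)) * ENNReal.ofReal (|t|^k)
    with hX
  have hwc : Continuous (fun t : ℝ => ENNReal.ofReal (Real.sqrt (1-t^2))) :=
    ENNReal.continuous_ofReal.comp (Real.continuous_sqrt.comp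
      (continuous_const.sub (continuous_pow 2)))
  have hpc : ∀ k : ℕ, Continuous (fun t : ℝ => ENNReal.ofReal (|t|^k)) :=
    fun k => ENNReal.continuous_ofReal.comp ((continuous_abs.pow k))
  have hXm : ∀ k : ℕ, AEMeasurable (X k) (volume.restrict (Ioo (-1:ℝ) 1)) :=
    fun k => ((hgm.pow_const 2).mul hwc.measurable.aemeasurable).mul
      (hpc k).measurable.aemeasurable
  -- step 1 : per-k bound
  have step1 : ∀ k : ℕ, ENNReal.ofReal (‖c k‖^2) ≤ (∫⁻ t in Ioo (-1:ℝ) 1, X k t) * A k := by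
    intro k
    have hnn : ∀ t : ℝ, ((‖g t * (starRingEnd ℂ) ((t:ℂ)^k)‖₊ : ENNReal))
        = (‖g t‖₊ : ENNReal) * ENNReal.ofReal (|t|^k) := by
      intro t
      rw [nnnorm_mul, ENNReal.coe_mul]
      congr 1
      rw [← enorm_eq_nnnorm, ← ofReal_norm_eq_enorm]
      congr 1
      rw [map_pow, Complex.conj_ofReal, norm_pow, Complex.norm_real, Real.norm_eq_abs]
    have h1 : (‖c k‖₊ : ENNReal) ≤ ∫⁻ t in Ioo (-1:ℝ) 1, (‖g t‖₊ : ENNReal)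
        * ENNReal.ofReal (|t|^k) := by
      refine le_trans (enorm_integral_le_lintegral_enorm _) (le_of_eq ?_)
      exact lintegral_congr fun t => hnn t
    have h2 : ENNReal.ofReal (‖c k‖^2) = ((‖c k‖₊ : ENNReal))^2 := by
      rw [ENNReal.ofReal_pow (norm_nonneg _), ofReal_norm_eq_enorm, enorm_eq_nnnorm]
    rw [h2]
    simp only [hA]
    rw [← A_change k]
    calc ((‖c k‖₊ : ENNReal))^2
        ≤ (∫⁻ t in Ioo (-1:ℝ) 1, (‖g t‖₊ : ENNReal) * ENNReal.ofReal (|t|^k))^2 := by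
          rw [pow_two, pow_two]; exact mul_le_mul' h1 h1
      _ ≤ _ := cs_step hgm k
  -- step 2 : sum them
  have step2 : ∑ k ∈ F, ENNReal.ofReal (‖c k‖^2) ≤ ENNReal.ofReal (2*π) * L := by
    calc ∑ k ∈ F, ENNReal.ofReal (‖c k‖^2)
        ≤ ∑ k ∈ F, (∫⁻ t in Ioo (-1:ℝ) 1, X k t) * A k :=
          Finset.sum_le_sum fun k _ => step1 k
      _ = ∑ k ∈ F, ∫⁻ t in Ioo (-1:ℝ) 1, X k t * A k :=
          Finset.sum_congr rfl fun k _ => (lintegral_mul_const'' (A k) (hXm k)).symm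
      _ = ∫⁻ t in Ioo (-1:ℝ) 1, ∑ k ∈ F, X k t * A k :=
          (lintegral_finset_sum' F (fun k _ => (hXm k).mul_const _)).symm
      _ ≤ ∫⁻ t in Ioo (-1:ℝ) 1, (‖g t‖₊ : ENNReal)^2 * ENNReal.ofReal (2*π) := by
          refine lintegral_mono_ae ((ae_restrict_iff' measurableSet_Ioo).2
            (Filter.Eventually.of_forall fun t ht => ?_))
          have ht1 : |t| < 1 := abs_lt.2 ⟨ht.1, ht.2⟩
          have hpos : (0:ℝ) < 1 - t^2 := by nlinarith [ht.1, ht.2]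
          have hsq : Real.sqrt (1 - |t|^2) = Real.sqrt (1 - t^2) := by rw [sq_abs]
          have hsum : ∑ k ∈ F, A k * ENNReal.ofReal (|t|^k)
              ≤ ENNReal.ofReal (2 * π / Real.sqrt (1 - t^2)) := by
            have := sum_A_le F (abs_nonneg t) ht1
            rwa [hsq] at this
          have hrearr : ∑ k ∈ F, X k t * A k
              = (‖g t‖₊ : ENNReal)^2 * (ENNReal.ofReal (Real.sqrt (1-t^2))
                * ∑ k ∈ F, A k * ENNReal.ofReal (|t|^k)) := by
            rw [Finset.mul_sum, Finset.mul_sum]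
            exact Finset.sum_congr rfl fun k _ => by simp only [hX]; ring
          rw [hrearr]
          have hw0 : ENNReal.ofReal (Real.sqrt (1-t^2)) ≠ 0 := by
            simp [Real.sqrt_pos.mpr hpos, ne_of_gt]
          calc (‖g t‖₊ : ENNReal)^2 * (ENNReal.ofReal (Real.sqrt (1-t^2))
                * ∑ k ∈ F, A k * ENNReal.ofReal (|t|^k))
              ≤ (‖g t‖₊ : ENNReal)^2 * (ENNReal.ofReal (Real.sqrt (1-t^2))
                * ENNReal.ofReal (2 * π / Real.sqrt (1 - t^2))) := by
                exact mul_le_mul_right (mul_le_mul_right hsum _) _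
            _ = (‖g t‖₊ : ENNReal)^2 * ENNReal.ofReal (2*π) := by
                rw [ENNReal.ofReal_div_of_pos (Real.sqrt_pos.mpr hpos),
                  ENNReal.mul_div_cancel hw0 ENNReal.ofReal_ne_top]
      _ = ENNReal.ofReal (2*π) * L := by
          rw [lintegral_mul_const'' _ (hgm.pow_const 2), mul_comm]
  -- step 3 : convert to real
  have hInt : Integrable (fun t => ‖g t‖^2) (volume.restrict (Ioo (-1:ℝ) 1)) := by
    have h := hg.integrable_norm_rpow (by norm_num) (by norm_num)
    have h2 : (2:ENNReal).toReal = (2:ℝ) := by norm_num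
    rw [h2] at h
    refine h.congr (Filter.Eventually.of_forall fun t => ?_)
    show ‖g t‖ ^ (2:ℝ) = ‖g t‖ ^ (2:ℕ)
    rw [← Real.rpow_natCast ‖g t‖ 2]
    norm_num
  have hL_top : L ≠ ⊤ := by
    have h2 : ∫⁻ t in Ioo (-1:ℝ) 1, ((‖(‖g t‖^2 : ℝ)‖₊ : ENNReal)) < ⊤ := hInt.2
    have h1 : L < ⊤ := by
      refine lt_of_eq_of_lt (lintegral_congr fun t => ?_) h2
      rw [← enorm_eq_nnnorm (‖g t‖^2 : ℝ), Real.enorm_eq_ofReal (by positivity), ENNReal.ofReal_pow (norm_nonneg _),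
        ofReal_norm_eq_enorm, enorm_eq_nnnorm]
    exact h1.ne
  have hEq : ∫ t in Ioo (-1:ℝ) 1, ‖g t‖^2 = L.toReal := by
    rw [integral_eq_lintegral_of_nonneg_ae
      (Filter.Eventually.of_forall fun t => by positivity) hInt.aestronglyMeasurable]
    congr 1
    exact lintegral_congr fun t => by
      rw [ENNReal.ofReal_pow (norm_nonneg _), ofReal_norm_eq_enorm, enorm_eq_nnnorm]
  calc ∑ k ∈ F, ‖c k‖^2
      = (∑ k ∈ F, ENNReal.ofReal (‖c k‖^2)).toReal := by
        rw [ENNReal.toReal_sum (fun k _ => ENNReal.ofReal_ne_top)]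
        exact Finset.sum_congr rfl fun k _ => (ENNReal.toReal_ofReal (by positivity)).symm
    _ ≤ (ENNReal.ofReal (2*π) * L).toReal :=
        ENNReal.toReal_mono (ENNReal.mul_ne_top ENNReal.ofReal_ne_top hL_top) step2
    _ = 2*π * L.toReal := by
        rw [ENNReal.toReal_mul, ENNReal.toReal_ofReal (by positivity)]
    _ = 2 * π * ∫ t in Set.Ioo (-1:ℝ) 1, ‖g t‖^2 := by rw [hEq]
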